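/- For the two-variable case n = 2 and a partition λ = (λ₁, λ₂) with λ₁ ≥ λ₂ ≥ 0 and λ₁ > λ₂, the polynomial x₁^{λ₁} x₂^{λ₂} applied to the operator □ = (x₁ - q x₂)∂₁ equals the Hall–Littlewood polynomial P_λ(x₁, x₂; q) = Σ over the two orderings, i.e. (x^λ)□ = x₁^{λ₁}x₂^{λ₂} + x₁^{λ₂}x₂^{λ₁} + (1-q)(x₁^{λ₁-1}x₂^{λ₂+1} + ⋯ + x₁^{λ₂+1}x₂^{λ₁-1}). -/

import Mathlib

/-- For `n = 2` and a partition `λ = (a, b)` with `a > b ≥ 0`, applying the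
operator `□ = (x₁ - q x₂)∂₁` (acting on the right: multiply by `x₁ - q x₂`, then apply
the divided difference `∂₁`) to the dominant monomial `x^λ = x₁^a x₂^b` gives the
Hall–Littlewood polynomial
`P_λ = x₁^a x₂^b + x₁^b x₂^a + (1-q)(x₁^{a-1}x₂^{b+1} + ⋯ + x₁^{b+1}x₂^{a-1})`.
The ring `ℚ(q)[x₁,x₂]` is realized inside a field `F`, the swap of `x` and `y` being an
involutive ring automorphism `σ` fixing `q`. -/
theorem box_of_dominant_monomial_is_hall_littlewood {F : Type*} [Field F]
    (q x y : F) (hxy : x ≠ y)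
    (σ : F ≃+* F) (hinv : ∀ f, σ (σ f) = f) (hσq : σ q = q) (hσx : σ x = y)
    (a b : ℕ) (hab : b < a) :
    ((x - q * y) * (x ^ a * y ^ b) - σ ((x - q * y) * (x ^ a * y ^ b))) / (x - y)
      = x ^ a * y ^ b + x ^ b * y ^ a
        + (1 - q) * ∑ j ∈ Finset.Ioo b a, x ^ j * y ^ (a + b - j) := by
  have hσy : σ y = x := by rw [← hσx, hinv]
  have hsub : x - y ≠ 0 := sub_ne_zero.mpr hxy
  set f : ℕ → F := fun j => x ^ j * y ^ (a + b + 1 - j) with hf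
  have htel : (x - y) * ∑ j ∈ Finset.Ioo b a, x ^ j * y ^ (a + b - j)
      = x ^ a * y ^ (b + 1) - x ^ (b + 1) * y ^ a := by
    have step : ∀ j ∈ Finset.Ioo b a,
        (x - y) * (x ^ j * y ^ (a + b - j)) = f (j + 1) - f j := by
      intro j hj
      simp only [Finset.mem_Ioo] at hj
      have h1 : a + b + 1 - (j + 1) = a + b - j := by omega
      have h2 : a + b + 1 - j = (a + b - j) + 1 := by omega
      simp only [hf, h1, h2, pow_succ]
      ring
    rw [Finset.mul_sum, Finset.sum_congr rfl step, ← Finset.Ico_add_one_left_eq_Ioo,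
      Finset.sum_Ico_eq_sub _ (by omega : b + 1 ≤ a),
      Finset.sum_range_sub f, Finset.sum_range_sub f]
    have ha : a + b + 1 - a = b + 1 := by omega
    have hb : a + b + 1 - (b + 1) = a := by omega
    simp only [hf, ha, hb]
    ring
  rw [div_eq_iff hsub]; simp only [map_mul, map_sub, map_pow, hσq, hσx, hσy]
  linear_combination (q - 1) * htel
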